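/- Let r > 0 and φ(x) = sin(πrx)/(πrx) (with φ(0) = 1). Then for each positive integer j there is a constant C (independent of r ≤ 1) such that Σ_{n∈ℤ} |φ^{(j)}(n)|² ≤ C^j r^j. -/

import Mathlib

open Real

open intervalIntegral MeasureTheory Metric

noncomputable def Fj (a : ℝ) (j : ℕ) (x : ℝ) : ℝ :=
  ∫ t in (0:ℝ)..1, t ^ j * Real.cos (a * x * t + j * (Real.pi / 2))

lemma cont_integrand (a : ℝ) (j : ℕ) (x : ℝ) :
    Continuous fun t : ℝ => t ^ j * Real.cos (a * x * t + j * (Real.pi / 2)) := by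
  fun_prop

lemma phi_eq (a : ℝ) (ha : a ≠ 0) (x : ℝ) :
    (if x = 0 then (1:ℝ) else Real.sin (a * x) / (a * x)) = Fj a 0 x := by
  unfold Fj
  by_cases hx : x = 0
  · simp [hx]
  · have hc : a * x ≠ 0 := mul_ne_zero ha hx
    simp only [hx, if_neg, pow_zero, one_mul, Nat.cast_zero, zero_mul, add_zero]
    have : ∀ t : ℝ, Real.cos (a * x * t) = Real.cos (t * (a * x)) := by
      intro t; ring_nf
    simp_rw [this]
    rw [intervalIntegral.integral_comp_mul_right (fun s => Real.cos s) hc]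
    simp [integral_cos, smul_eq_mul, div_eq_inv_mul]

lemma cos_succ (a : ℝ) (j : ℕ) (y t : ℝ) :
    Real.cos (a * y * t + (j + 1 : ℕ) * (Real.pi / 2)) =
      -Real.sin (a * y * t + j * (Real.pi / 2)) := by
  push_cast
  rw [show a * y * t + (j + 1) * (Real.pi / 2)
      = (a * y * t + j * (Real.pi / 2)) + Real.pi / 2 by ring,
    Real.cos_add_pi_div_two]

lemma hasDerivAt_Fj (a : ℝ) (j : ℕ) (x : ℝ) :
    HasDerivAt (Fj a j) (a * Fj a (j + 1) x) x := by
  have key := intervalIntegral.hasDerivAt_integral_of_dominated_loc_of_deriv_le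
    (F := fun y t => t ^ j * Real.cos (a * y * t + j * (Real.pi / 2)))
    (F' := fun y t => a * (t ^ (j+1) * Real.cos (a * y * t + (j+1 : ℕ) * (Real.pi / 2))))
    (x₀ := x) (a := (0:ℝ)) (b := 1) (μ := volume) (bound := fun _ => |a|)
    (s := ball x 1) (ball_mem_nhds x one_pos)
    ?_ ?_ ?_ ?_ ?_ ?_
  · have h2 : (∫ t in (0:ℝ)..1,
        a * (t ^ (j+1) * Real.cos (a * x * t + (j+1 : ℕ) * (Real.pi / 2))))
        = a * Fj a (j+1) x := by
      rw [intervalIntegral.integral_const_mul]; rfl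
    rw [h2] at key
    exact key.2
  · filter_upwards with y
    exact ((by fun_prop : Continuous fun t : ℝ =>
      t ^ j * Real.cos (a * y * t + j * (Real.pi / 2)))).aestronglyMeasurable
  · exact ((by fun_prop : Continuous fun t : ℝ =>
      t ^ j * Real.cos (a * x * t + j * (Real.pi / 2)))).intervalIntegrable _ _
  · exact ((by fun_prop : Continuous fun t : ℝ =>
      a * (t ^ (j+1) * Real.cos (a * x * t + (j+1 : ℕ) * (Real.pi / 2))))).aestronglyMeasurable
  · filter_upwards with t ht y _
    have ht' : t ∈ Set.Ioc (0:ℝ) 1 := by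
      simpa [Set.uIoc_of_le (zero_le_one (α := ℝ))] using ht
    have h1 : |t ^ (j+1)| ≤ 1 := by
      rw [abs_pow]
      exact pow_le_one₀ (abs_nonneg t) (by rw [abs_of_pos ht'.1]; exact ht'.2)
    calc ‖a * (t ^ (j+1) * Real.cos (a * y * t + (j+1 : ℕ) * (Real.pi / 2)))‖
        = |a| * (|t ^ (j+1)| * |Real.cos (a * y * t + (j+1 : ℕ) * (Real.pi / 2))|) := by
          simp [abs_mul]
      _ ≤ |a| * (1 * 1) := by
          have := h1
          gcongr
          exact Real.abs_cos_le_one _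
      _ = |a| := by ring
  · exact intervalIntegrable_const
  · filter_upwards with t _ y _
    have h1 : HasDerivAt (fun y : ℝ => a * y * t + j * (Real.pi / 2)) (a * t) y := by
      have : HasDerivAt (fun y : ℝ => a * y * t) (a * t) y := by
        simpa using ((hasDerivAt_id y).const_mul a).mul_const t
      simpa using this.add_const ((j:ℝ) * (Real.pi / 2))
    have h2 := (h1.cos).const_mul (t ^ j)
    refine h2.congr_deriv ?_
    rw [cos_succ]
    ring

lemma iteratedDeriv_Fj (a : ℝ) (j : ℕ) :
    iteratedDeriv j (Fj a 0) = fun x => a ^ j * Fj a j x := by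
  induction j with
  | zero => funext x; simp [iteratedDeriv_zero]
  | succ n ih =>
      funext x
      rw [iteratedDeriv_succ, ih]
      have h := (hasDerivAt_Fj a n x).const_mul (a ^ n)
      rw [h.deriv]
      ring

lemma Fj_le_one (a : ℝ) (j : ℕ) (x : ℝ) : |Fj a j x| ≤ 1 := by
  have h := intervalIntegral.norm_integral_le_of_norm_le_const
    (a := (0:ℝ)) (b := 1) (C := 1)
    (f := fun t => t ^ j * Real.cos (a * x * t + j * (Real.pi / 2))) ?_
  · simpa [Fj] using h
  · intro t ht
    have ht' : t ∈ Set.Ioc (0:ℝ) 1 := by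
      simpa [Set.uIoc_of_le (zero_le_one (α := ℝ))] using ht
    have h1 : |t ^ j| ≤ 1 := by
      rw [abs_pow]
      exact pow_le_one₀ (abs_nonneg t) (by rw [abs_of_pos ht'.1]; exact ht'.2)
    calc ‖t ^ j * Real.cos (a * x * t + j * (Real.pi / 2))‖
        = |t ^ j| * |Real.cos (a * x * t + j * (Real.pi / 2))| := abs_mul _ _
      _ ≤ 1 * 1 := by
          have := h1
          gcongr
          exact Real.abs_cos_le_one _
      _ = 1 := by ring

lemma Fj_decay (a : ℝ) (ha : 0 < a) (j : ℕ) (x : ℝ) (hx : x ≠ 0) :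
    |Fj a j x| ≤ 2 / (a * |x|) := by
  set c : ℝ := a * x with hc
  have hcne : c ≠ 0 := mul_ne_zero ha.ne' hx
  have hsin : ∀ t : ℝ, HasDerivAt
      (fun t => Real.sin (a * x * t + j * (Real.pi / 2)) * c⁻¹)
      (Real.cos (a * x * t + j * (Real.pi / 2))) t := by
    intro t
    have h1 : HasDerivAt (fun t : ℝ => a * x * t + j * (Real.pi / 2)) (a * x) t := by
      simpa using ((hasDerivAt_id t).const_mul (a * x)).add_const ((j:ℝ) * (Real.pi / 2))
    have h2 := (h1.sin).mul_const c⁻¹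
    refine h2.congr_deriv ?_
    rw [← hc]
    field_simp
  have hparts := intervalIntegral.integral_mul_deriv_eq_deriv_mul
    (a := (0:ℝ)) (b := 1)
    (u := fun t => t ^ j) (u' := fun t => (j : ℝ) * t ^ (j - 1))
    (v := fun t => Real.sin (a * x * t + j * (Real.pi / 2)) * c⁻¹)
    (v' := fun t => Real.cos (a * x * t + j * (Real.pi / 2)))
    (fun t _ => hasDerivAt_pow j t)
    (fun t _ => hsin t)
    ((by fun_prop : Continuous fun t : ℝ => (j : ℝ) * t ^ (j - 1)).intervalIntegrable _ _)
    ((by fun_prop : Continuous fun t : ℝ =>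
      Real.cos (a * x * t + j * (Real.pi / 2))).intervalIntegrable _ _)
  have hF : Fj a j x = (1:ℝ) ^ j * (Real.sin (a * x * 1 + j * (Real.pi / 2)) * c⁻¹)
      - (0:ℝ) ^ j * (Real.sin (a * x * 0 + j * (Real.pi / 2)) * c⁻¹)
      - ∫ t in (0:ℝ)..1, ((j : ℝ) * t ^ (j - 1)) *
          (Real.sin (a * x * t + j * (Real.pi / 2)) * c⁻¹) := hparts
  have hzero : (0:ℝ) ^ j * (Real.sin (a * x * 0 + j * (Real.pi / 2)) * c⁻¹) = 0 := by
    cases j with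
    | zero => simp
    | succ n => simp [zero_pow]
  rw [hzero, sub_zero] at hF
  have hb1 : |(1:ℝ) ^ j * (Real.sin (a * x * 1 + j * (Real.pi / 2)) * c⁻¹)| ≤ |c|⁻¹ := by
    rw [one_pow, one_mul, abs_mul, abs_inv]
    calc |Real.sin (a * x * 1 + j * (Real.pi / 2))| * |c|⁻¹ ≤ 1 * |c|⁻¹ := by
          gcongr; exact Real.abs_sin_le_one _
      _ = |c|⁻¹ := one_mul _
  have hb2 : |∫ t in (0:ℝ)..1, ((j : ℝ) * t ^ (j - 1)) *
      (Real.sin (a * x * t + j * (Real.pi / 2)) * c⁻¹)| ≤ |c|⁻¹ := by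
    have hgint : IntervalIntegrable (fun t : ℝ => (j : ℝ) * t ^ (j - 1) * |c|⁻¹)
        volume 0 1 :=
      ((by fun_prop : Continuous fun t : ℝ =>
        (j : ℝ) * t ^ (j - 1) * |c|⁻¹)).intervalIntegrable _ _
    have hle : ∀ᵐ t ∂(volume.restrict (Set.uIoc (0:ℝ) 1)),
        ‖((j : ℝ) * t ^ (j - 1)) * (Real.sin (a * x * t + j * (Real.pi / 2)) * c⁻¹)‖
          ≤ (j : ℝ) * t ^ (j - 1) * |c|⁻¹ := by
      filter_upwards [ae_restrict_mem measurableSet_uIoc] with t ht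
      have ht' : t ∈ Set.Ioc (0:ℝ) 1 := by
        simpa [Set.uIoc_of_le (zero_le_one (α := ℝ))] using ht
      have htpos : (0:ℝ) ≤ t := ht'.1.le
      have e1 : ‖(j:ℝ)‖ = (j:ℝ) := by simp
      have e2 : ‖t ^ (j - 1)‖ = t ^ (j - 1) := by
        rw [Real.norm_eq_abs, abs_of_nonneg (pow_nonneg htpos _)]
      rw [norm_mul, norm_mul, e1, e2]
      have hs : ‖Real.sin (a * x * t + j * (Real.pi / 2)) * c⁻¹‖ ≤ |c|⁻¹ := by
        rw [norm_mul, Real.norm_eq_abs, Real.norm_eq_abs, abs_inv]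
        calc |Real.sin (a * x * t + j * (Real.pi / 2))| * |c|⁻¹ ≤ 1 * |c|⁻¹ :=
              mul_le_mul_of_nonneg_right (Real.abs_sin_le_one _) (by positivity)
          _ = |c|⁻¹ := one_mul _
      exact mul_le_mul_of_nonneg_left hs (by positivity)
    have := intervalIntegral.norm_integral_le_abs_of_norm_le hle hgint
    refine this.trans ?_
    rw [intervalIntegral.integral_mul_const, intervalIntegral.integral_const_mul,
      integral_pow, one_pow, zero_pow (by omega : j - 1 + 1 ≠ 0), sub_zero,
      abs_of_nonneg (by positivity)]
    have hjle : (j:ℝ) * (1 / ((j - 1 : ℕ) + 1)) ≤ 1 := by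
      rw [mul_one_div, div_le_one (by positivity)]
      exact_mod_cast (by omega : j ≤ (j - 1) + 1)
    calc (j:ℝ) * (1 / ((j - 1 : ℕ) + 1)) * |c|⁻¹ ≤ 1 * |c|⁻¹ :=
          mul_le_mul_of_nonneg_right hjle (by positivity)
      _ = |c|⁻¹ := one_mul _
  have habs : |c| = a * |x| := by rw [hc, abs_mul, abs_of_pos ha]
  calc |Fj a j x| ≤ |(1:ℝ) ^ j * (Real.sin (a * x * 1 + j * (Real.pi / 2)) * c⁻¹)|
        + |∫ t in (0:ℝ)..1, ((j : ℝ) * t ^ (j - 1)) *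
          (Real.sin (a * x * t + j * (Real.pi / 2)) * c⁻¹)| := by
        rw [hF]; exact abs_sub _ _
    _ ≤ |c|⁻¹ + |c|⁻¹ := add_le_add hb1 hb2
    _ = 2 / (a * |x|) := by rw [habs]; ring

lemma basel_base : Summable (fun n : ℕ => ((n:ℝ) ^ 2)⁻¹) := by
  simpa [one_div] using Real.summable_one_div_nat_pow.mpr one_lt_two

lemma shift_summable (N : ℕ) : Summable (fun n : ℕ => (((n:ℝ) + N) ^ 2)⁻¹) := by
  have := (summable_nat_add_iff (f := fun n : ℕ => ((n:ℝ) ^ 2)⁻¹) N).mpr basel_base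
  refine this.congr fun n => ?_
  push_cast
  ring_nf

lemma tail_sq_sum (N : ℕ) (hN : 1 ≤ N) :
    ∑' n : ℕ, (((n:ℝ) + N) ^ 2)⁻¹ ≤ 2 / N := by
  have hNpos : (0:ℝ) < N := by exact_mod_cast hN
  refine Summable.tsum_le_of_sum_le (shift_summable N) fun s => ?_
  obtain ⟨m, hs⟩ := s.exists_nat_subset_range
  calc ∑ i ∈ s, (((i:ℝ) + N) ^ 2)⁻¹
      ≤ ∑ i ∈ Finset.range m, (((i:ℝ) + N) ^ 2)⁻¹ :=
        Finset.sum_le_sum_of_subset_of_nonneg hs (fun i _ _ => by positivity)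
    _ ≤ ∑ i ∈ Finset.range m, 2 * (((i:ℝ) + N)⁻¹ - (((i+1:ℕ):ℝ) + N)⁻¹) := by
        refine Finset.sum_le_sum fun i _ => ?_
        have hk : (1:ℝ) ≤ (i:ℝ) + N := by
          have h0 : (0:ℝ) ≤ (i:ℝ) := by positivity
          have h1 : (1:ℝ) ≤ (N:ℝ) := by exact_mod_cast hN
          linarith
        have hkpos : (0:ℝ) < (i:ℝ) + N := by linarith
        have hk1pos : (0:ℝ) < (i:ℝ) + N + 1 := by linarith
        have heq : ((i:ℝ) + N)⁻¹ - (((i+1:ℕ):ℝ) + N)⁻¹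
            = (((i:ℝ) + N) * ((i:ℝ) + N + 1))⁻¹ := by
          push_cast
          rw [show (i:ℝ) + 1 + N = (i:ℝ) + N + 1 by ring]
          field_simp
          ring
        rw [heq]
        rw [inv_eq_one_div, inv_eq_one_div, mul_one_div, div_le_div_iff₀ (by positivity) (by positivity)]
        nlinarith
    _ = 2 * ((((0:ℕ):ℝ) + N)⁻¹ - ((m:ℝ) + N)⁻¹) := by
        rw [← Finset.mul_sum]
        congr 1
        exact Finset.sum_range_sub' (fun i => ((i:ℝ) + N)⁻¹) m
    _ ≤ 2 / N := by
        rw [Nat.cast_zero, zero_add]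
        have : (0:ℝ) ≤ ((m:ℝ) + N)⁻¹ := by positivity
        rw [div_eq_mul_inv]
        nlinarith

lemma summable_nat_inv (a : ℝ) (ha : 0 < a) (hapi : a ≤ 4) :
    Summable (fun n : ℕ => (4 + (a * n) ^ 2)⁻¹) := by
  refine Summable.of_nonneg_of_le (fun n => by positivity)
    (fun n => ?_) ((shift_summable 1).mul_left (4 / a ^ 2))
  have h1 : (0:ℝ) < 4 + (a * n) ^ 2 := by positivity
  have h2 : (0:ℝ) < ((n:ℝ) + (1:ℕ)) ^ 2 := by positivity
  have heq : 4 / a ^ 2 * (((n:ℝ) + (1:ℕ)) ^ 2)⁻¹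
      = 4 / (a ^ 2 * ((n:ℝ) + (1:ℕ)) ^ 2) := by
    rw [div_eq_mul_inv, mul_assoc, ← mul_inv, ← div_eq_mul_inv]
  rw [heq, inv_eq_one_div, div_le_div_iff₀ h1 (by positivity)]
  have hn : (0:ℝ) ≤ (n:ℝ) := Nat.cast_nonneg n
  push_cast
  rcases Nat.eq_zero_or_pos n with h | h
  · subst h
    push_cast
    nlinarith
  · have h1n : (1:ℝ) ≤ (n:ℝ) := by exact_mod_cast h
    nlinarith [sq_nonneg (a * n), mul_pos ha ha, sq_nonneg ((n:ℝ) - 1)]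

lemma nat_tsum_bound (a : ℝ) (ha : 0 < a) (hapi : a ≤ 4) :
    ∑' n : ℕ, (4 + (a * n) ^ 2)⁻¹ ≤ 4 / a := by
  set N : ℕ := ⌈1/a⌉₊ with hNdef
  have hN1 : 1 ≤ N := Nat.one_le_iff_ne_zero.mpr (by
    simp only [hNdef, ne_eq, Nat.ceil_eq_zero, not_le]
    positivity)
  have hNge : 1/a ≤ (N:ℝ) := Nat.le_ceil _
  have hNle : (N:ℝ) ≤ 1/a + 1 := (Nat.ceil_lt_add_one (by positivity)).le
  have hNpos : (0:ℝ) < N := by exact_mod_cast hN1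
  have hsum := summable_nat_inv a ha hapi
  rw [← hsum.sum_add_tsum_nat_add N]
  have hpart1 : ∑ i ∈ Finset.range N, (4 + (a * i) ^ 2)⁻¹ ≤ (N:ℝ) / 4 := by
    calc ∑ i ∈ Finset.range N, (4 + (a * i) ^ 2)⁻¹
        ≤ ∑ i ∈ Finset.range N, (4:ℝ)⁻¹ := by
          refine Finset.sum_le_sum fun i _ => ?_
          exact inv_anti₀ (by norm_num) (by nlinarith [sq_nonneg (a*i)])
      _ = (N:ℝ) / 4 := by
          rw [Finset.sum_const, Finset.card_range]
          simp [div_eq_mul_inv]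
  have hpart2 : ∑' n : ℕ, (4 + (a * ((n + N : ℕ):ℝ)) ^ 2)⁻¹ ≤ a⁻¹ * 2 := by
    have hle : ∀ n : ℕ, (4 + (a * ((n + N : ℕ):ℝ)) ^ 2)⁻¹
        ≤ (a ^ 2)⁻¹ * (((n:ℝ) + N) ^ 2)⁻¹ := by
      intro n
      have hk : (1:ℝ) ≤ (n:ℝ) + N := by
        have : (0:ℝ) ≤ (n:ℝ) := Nat.cast_nonneg n
        linarith [hNpos, (by exact_mod_cast hN1 : (1:ℝ) ≤ (N:ℝ))]
      have hkpos : (0:ℝ) < (n:ℝ) + N := by linarith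
      rw [← mul_inv]
      refine inv_anti₀ (by positivity) ?_
      push_cast
      nlinarith [sq_nonneg (a * ((n:ℝ) + N))]
    calc ∑' n : ℕ, (4 + (a * ((n + N : ℕ):ℝ)) ^ 2)⁻¹
        ≤ ∑' n : ℕ, (a ^ 2)⁻¹ * (((n:ℝ) + N) ^ 2)⁻¹ := by
          refine Summable.tsum_le_tsum hle ?_ ((shift_summable N).mul_left _)
          exact (summable_nat_add_iff N).mpr hsum
      _ = (a ^ 2)⁻¹ * ∑' n : ℕ, (((n:ℝ) + N) ^ 2)⁻¹ := tsum_mul_left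
      _ ≤ (a ^ 2)⁻¹ * (2 / N) := by
          exact mul_le_mul_of_nonneg_left (tail_sq_sum N hN1) (by positivity)
      _ ≤ a⁻¹ * 2 := by
          have h1N : (1:ℝ) ≤ a * N := by
            have h := mul_le_mul_of_nonneg_left hNge ha.le
            rwa [mul_one_div, div_self ha.ne'] at h
          have hinv : ((N:ℝ))⁻¹ ≤ a := by
            rw [inv_eq_one_div, div_le_iff₀ hNpos]
            linarith
          have key : a⁻¹ * ((N:ℝ))⁻¹ ≤ 1 := by
            calc a⁻¹ * ((N:ℝ))⁻¹ ≤ a⁻¹ * a :=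
                  mul_le_mul_of_nonneg_left hinv (by positivity)
              _ = 1 := inv_mul_cancel₀ ha.ne'
          rw [div_eq_mul_inv, sq, mul_inv]
          nlinarith [mul_le_mul_of_nonneg_left key
            (by positivity : (0:ℝ) ≤ 2 * a⁻¹), inv_nonneg.mpr ha.le]
  calc ∑ i ∈ Finset.range N, (4 + (a * i) ^ 2)⁻¹
        + ∑' n : ℕ, (4 + (a * ((n + N : ℕ):ℝ)) ^ 2)⁻¹
      ≤ (N:ℝ) / 4 + a⁻¹ * 2 := add_le_add hpart1 hpart2
    _ ≤ (1/a + 1) / 4 + a⁻¹ * 2 := by gcongr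
    _ ≤ 4 / a := by
        rw [one_div, div_eq_mul_inv 4 a]
        nlinarith [mul_le_mul_of_nonneg_right hapi (inv_nonneg.mpr ha.le),
          mul_inv_cancel₀ ha.ne', inv_nonneg.mpr ha.le]

lemma summable_int_inv (a : ℝ) (ha : 0 < a) (hapi : a ≤ 4) :
    Summable (fun n : ℤ => (4 + (a * (n:ℝ)) ^ 2)⁻¹) := by
  refine Summable.of_nat_of_neg_add_one ?_ ?_
  · refine (summable_nat_inv a ha hapi).congr fun n => ?_
    norm_num
  · refine ((summable_nat_add_iff 1).mpr (summable_nat_inv a ha hapi)).congr fun n => ?_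
    push_cast
    ring_nf

set_option maxHeartbeats 1000000 in
lemma int_tsum_bound (a : ℝ) (ha : 0 < a) (hapi : a ≤ 4) :
    ∑' n : ℤ, (4 + (a * (n:ℝ)) ^ 2)⁻¹ ≤ 8 / a := by
  have hnat := summable_nat_inv a ha hapi
  have hpos : Summable (fun n : ℕ => (4 + (a * ((n:ℤ):ℝ)) ^ 2)⁻¹) := by
    refine hnat.congr fun n => ?_; norm_num
  have hneg : Summable (fun n : ℕ => (4 + (a * ((-(n+1):ℤ):ℝ)) ^ 2)⁻¹) := by
    refine ((summable_nat_add_iff 1).mpr hnat).congr fun n => ?_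
    push_cast
    ring_nf
  rw [tsum_of_nat_of_neg_add_one hpos hneg]
  have h1 : ∑' n : ℕ, (4 + (a * ((n:ℤ):ℝ)) ^ 2)⁻¹ ≤ 4 / a := by
    calc ∑' n : ℕ, (4 + (a * ((n:ℤ):ℝ)) ^ 2)⁻¹
        = ∑' n : ℕ, (4 + (a * (n:ℝ)) ^ 2)⁻¹ := by
          refine tsum_congr fun n => ?_; norm_num
      _ ≤ 4 / a := nat_tsum_bound a ha hapi
  have h2 : ∑' n : ℕ, (4 + (a * ((-(n+1):ℤ):ℝ)) ^ 2)⁻¹ ≤ 4 / a := by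
    have he : ∑' n : ℕ, (4 + (a * ((-(n+1):ℤ):ℝ)) ^ 2)⁻¹
        = ∑' n : ℕ, (4 + (a * (((n+1:ℕ)):ℝ)) ^ 2)⁻¹ := by
      refine tsum_congr fun n => ?_
      push_cast
      ring_nf
    rw [he]
    have hkey := hnat.sum_add_tsum_nat_add 1
    have h0 : (0:ℝ) ≤ ∑ i ∈ Finset.range 1, (4 + (a * (i:ℝ)) ^ 2)⁻¹ := by
      refine Finset.sum_nonneg fun i _ => by positivity
    have := nat_tsum_bound a ha hapi
    linarith
  calc ∑' n : ℕ, (4 + (a * ((n:ℤ):ℝ)) ^ 2)⁻¹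
        + ∑' n : ℕ, (4 + (a * ((-(n+1):ℤ):ℝ)) ^ 2)⁻¹
      ≤ 4 / a + 4 / a := add_le_add h1 h2
    _ = 8 / a := by ring

lemma term_bound (a : ℝ) (ha : 0 < a) (j : ℕ) (n : ℤ) :
    (a ^ j * Fj a j (n:ℝ)) ^ 2 ≤ 8 * a ^ (2*j) * (4 + (a * (n:ℝ)) ^ 2)⁻¹ := by
  have hFsq : (Fj a j (n:ℝ)) ^ 2 ≤ 1 := by
    have h := Fj_le_one a j (n:ℝ)
    calc (Fj a j (n:ℝ)) ^ 2 = |Fj a j (n:ℝ)| ^ 2 := (sq_abs _).symm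
      _ ≤ 1 ^ 2 := pow_le_pow_left₀ (abs_nonneg _) h 2
      _ = 1 := one_pow 2
  have hL : (a ^ j * Fj a j (n:ℝ)) ^ 2 = a ^ (2*j) * (Fj a j (n:ℝ)) ^ 2 := by
    rw [mul_pow, ← pow_mul, mul_comm j 2]
  by_cases h4 : (a * (n:ℝ)) ^ 2 ≤ 4
  · have hinv : (8:ℝ)⁻¹ ≤ (4 + (a * (n:ℝ)) ^ 2)⁻¹ :=
      inv_anti₀ (by positivity) (by linarith)
    calc (a ^ j * Fj a j (n:ℝ)) ^ 2 = a ^ (2*j) * (Fj a j (n:ℝ)) ^ 2 := hL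
      _ ≤ a ^ (2*j) * 1 := mul_le_mul_of_nonneg_left hFsq (by positivity)
      _ = 8 * a ^ (2*j) * 8⁻¹ := by ring
      _ ≤ 8 * a ^ (2*j) * (4 + (a * (n:ℝ)) ^ 2)⁻¹ :=
          mul_le_mul_of_nonneg_left hinv (by positivity)
  · push_neg at h4
    have hn0 : ((n:ℝ)) ≠ 0 := by
      intro h
      rw [h] at h4
      norm_num at h4
    have hd := Fj_decay a ha j (n:ℝ) hn0
    have hX : (0:ℝ) < (a * (n:ℝ)) ^ 2 := by
      have : a * (n:ℝ) ≠ 0 := mul_ne_zero ha.ne' hn0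
      positivity
    have he : (2 / (a * |(n:ℝ)|)) ^ 2 = 4 / (a * (n:ℝ)) ^ 2 := by
      rw [div_pow, mul_pow, mul_pow, sq_abs]
      norm_num
    have hsq : (Fj a j (n:ℝ)) ^ 2 ≤ 4 / (a * (n:ℝ)) ^ 2 := by
      calc (Fj a j (n:ℝ)) ^ 2 = |Fj a j (n:ℝ)| ^ 2 := (sq_abs _).symm
        _ ≤ (2 / (a * |(n:ℝ)|)) ^ 2 := pow_le_pow_left₀ (abs_nonneg _) hd 2
        _ = 4 / (a * (n:ℝ)) ^ 2 := he
    have key : 4 / (a * (n:ℝ)) ^ 2 ≤ 8 * (4 + (a * (n:ℝ)) ^ 2)⁻¹ := by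
      rw [inv_eq_one_div, mul_one_div, div_le_div_iff₀ hX (by positivity)]
      nlinarith
    calc (a ^ j * Fj a j (n:ℝ)) ^ 2 = a ^ (2*j) * (Fj a j (n:ℝ)) ^ 2 := hL
      _ ≤ a ^ (2*j) * (4 / (a * (n:ℝ)) ^ 2) :=
          mul_le_mul_of_nonneg_left hsq (by positivity)
      _ ≤ a ^ (2*j) * (8 * (4 + (a * (n:ℝ)) ^ 2)⁻¹) :=
          mul_le_mul_of_nonneg_left key (by positivity)
      _ = 8 * a ^ (2*j) * (4 + (a * (n:ℝ)) ^ 2)⁻¹ := by ring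

theorem stmt_17 :
    ∃ C : ℝ, ∀ r : ℝ, 0 < r → r ≤ 1 → ∀ j : ℕ, 1 ≤ j →
      ∑' n : ℤ,
        (iteratedDeriv j
          (fun x : ℝ => if x = 0 then 1 else Real.sin (Real.pi * r * x) / (Real.pi * r * x))
          (n : ℝ)) ^ 2 ≤ C ^ j * r ^ j := by
  refine ⟨64 * Real.pi ^ 2, ?_⟩
  intro r hr hr1 j hj
  set a : ℝ := Real.pi * r with hadef
  have ha : 0 < a := mul_pos Real.pi_pos hr
  have hapi : a ≤ Real.pi := by
    calc a = Real.pi * r := hadef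
      _ ≤ Real.pi * 1 := mul_le_mul_of_nonneg_left hr1 Real.pi_pos.le
      _ = Real.pi := mul_one _
  have ha4 : a ≤ 4 := hapi.trans Real.pi_le_four
  have hphi : (fun x : ℝ => if x = 0 then (1:ℝ) else Real.sin (a * x) / (a * x)) = Fj a 0 := by
    funext x
    exact phi_eq a ha.ne' x
  rw [hphi]
  simp only [iteratedDeriv_Fj a j]
  have hterm : ∀ n : ℤ, (a ^ j * Fj a j (n:ℝ)) ^ 2
      ≤ 8 * a ^ (2*j) * (4 + (a * (n:ℝ)) ^ 2)⁻¹ := fun n => term_bound a ha j n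
  have hsumR : Summable (fun n : ℤ => 8 * a ^ (2*j) * (4 + (a * (n:ℝ)) ^ 2)⁻¹) :=
    (summable_int_inv a ha ha4).mul_left _
  have hsumL : Summable (fun n : ℤ => (a ^ j * Fj a j (n:ℝ)) ^ 2) :=
    Summable.of_nonneg_of_le (fun n => sq_nonneg _) hterm hsumR
  have h2j : 2*j = (2*j - 1) + 1 := by omega
  have hval : 8 * a ^ (2*j) * (8/a) = 64 * a ^ (2*j-1) := by
    rw [h2j, Nat.add_sub_cancel, pow_succ]
    field_simp
    ring
  have hfinal : 8 * a ^ (2*j) * (8/a) ≤ (64 * Real.pi ^ 2) ^ j * r ^ j := by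
    rw [hval, hadef, mul_pow]
    have hrle : r ^ (2*j-1) ≤ r ^ j := pow_le_pow_of_le_one hr.le hr1 (by omega)
    have hpi1 : (1:ℝ) ≤ Real.pi := by linarith [Real.pi_gt_three]
    have hp : Real.pi ^ (2*j-1) ≤ Real.pi ^ (2*j) := pow_le_pow_right₀ hpi1 (by omega)
    have h64 : (64:ℝ) ≤ 64 ^ j := le_self_pow₀ (by norm_num) (by omega)
    calc 64 * (Real.pi ^ (2*j-1) * r ^ (2*j-1))
        ≤ 64 ^ j * (Real.pi ^ (2*j) * r ^ j) := by
          refine mul_le_mul h64 ?_ (by positivity) (by positivity)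
          exact mul_le_mul hp hrle (by positivity) (by positivity)
      _ = (64 * Real.pi ^ 2) ^ j * r ^ j := by
          rw [mul_pow 64 (Real.pi ^ 2) j, ← pow_mul]
          ring
  calc ∑' n : ℤ, (a ^ j * Fj a j (n:ℝ)) ^ 2
      ≤ ∑' n : ℤ, 8 * a ^ (2*j) * (4 + (a * (n:ℝ)) ^ 2)⁻¹ :=
        hsumL.tsum_le_tsum hterm hsumR
    _ = 8 * a ^ (2*j) * ∑' n : ℤ, (4 + (a * (n:ℝ)) ^ 2)⁻¹ := tsum_mul_left
    _ ≤ 8 * a ^ (2*j) * (8 / a) :=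
        mul_le_mul_of_nonneg_left (int_tsum_bound a ha ha4) (by positivity)
    _ ≤ (64 * Real.pi ^ 2) ^ j * r ^ j := hfinal
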